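/- For the n×n matrix A_n with entries (A_n)_{ij} = (j-i)², the vector w with entries w_i = n+1-2i is an eigenvector of A_n with eigenvalue -n(n²-1)/6. -/
import Mathlib

open Matrix

lemma sum1 (n : ℕ) : ∑ j ∈ Finset.range n, (j : ℝ) = n * (n - 1) / 2 := by
  induction n with
  | zero => simp
  | succ m ih => rw [Finset.sum_range_succ, ih]; push_cast; ring

lemma sum2 (n : ℕ) : ∑ j ∈ Finset.range n, (j : ℝ) ^ 2 = n * (n - 1) * (2 * n - 1) / 6 := by
  induction n with
  | zero => simp
  | succ m ih => rw [Finset.sum_range_succ, ih]; push_cast; ring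

lemma sum3 (n : ℕ) : ∑ j ∈ Finset.range n, (j : ℝ) ^ 3 = (n * (n - 1) / 2) ^ 2 := by
  induction n with
  | zero => simp
  | succ m ih => rw [Finset.sum_range_succ, ih]; push_cast; ring

lemma key (n : ℕ) (c : ℝ) :
    ∑ j ∈ Finset.range n, ((j : ℝ) - c) ^ 2 * ((n : ℝ) - 1 - 2 * j)
      = -((n : ℝ) * ((n : ℝ) ^ 2 - 1) / 6) * ((n : ℝ) - 1 - 2 * c) := by
  have h : ∀ j ∈ Finset.range n,
      ((j : ℝ) - c) ^ 2 * ((n : ℝ) - 1 - 2 * j)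
        = -2 * (j : ℝ) ^ 3 + ((n : ℝ) - 1 + 4 * c) * (j : ℝ) ^ 2
          + (-2 * c * ((n : ℝ) - 1) - 2 * c ^ 2) * (j : ℝ) + c ^ 2 * ((n : ℝ) - 1) := by
    intro j _; ring
  rw [Finset.sum_congr rfl h]
  simp only [Finset.sum_add_distrib, ← Finset.mul_sum, Finset.sum_const,
    Finset.card_range, nsmul_eq_mul]
  rw [sum1, sum2, sum3]; ring

theorem stmt_0 (n : ℕ) (hn : 1 ≤ n)
    (A : Matrix (Fin n) (Fin n) ℝ)
    (hA : ∀ i j : Fin n, A i j = ((j.val : ℝ) - (i.val : ℝ)) ^ 2)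
    (w : Fin n → ℝ)
    (hw : ∀ i : Fin n, w i = (n : ℝ) + 1 - 2 * ((i.val : ℝ) + 1)) :
    A.mulVec w = (-((n : ℝ) * ((n : ℝ) ^ 2 - 1) / 6)) • w := by
  funext i
  simp only [mulVec, dotProduct, Pi.smul_apply, smul_eq_mul]
  have : ∀ j : Fin n, A i j * w j
      = ((j.val : ℝ) - (i.val : ℝ)) ^ 2 * ((n : ℝ) - 1 - 2 * j.val) := by
    intro j; rw [hA, hw]; ring
  rw [Finset.sum_congr rfl (fun j _ => this j)]
  rw [Fin.sum_univ_eq_sum_range (fun j => ((j : ℝ) - (i.val : ℝ)) ^ 2 * ((n : ℝ) - 1 - 2 * j))]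
  rw [key n (i.val : ℝ), hw]; ring
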